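/- Quadratic drift estimate along trajectories (the key estimate in the proof of Lemma 4.2(3)). Let n ∈ ℕ and a, K > 0. Let z, ρ : [t₀, t₁] → ℝ be differentiable functions with ρ(t) > 0, ρ'(t) ≤ −a·ρ(t)ⁿ and |z'(t)| ≤ K·ρ(t)^{n+1} for all t ∈ [t₀, t₁]. Then |z(t₁) − z(t₀)| ≤ (K/(2a))·(ρ(t₀)² − ρ(t₁)²) ≤ (K/(2a))·ρ(t₀)². -/

import Mathlib

theorem drift_aux
    (n : ℕ) (a K : ℝ) (ha : 0 < a) (hK : 0 < K)
    (t₀ t₁ : ℝ) (ht : t₀ ≤ t₁)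
    (z ρ z' ρ' : ℝ → ℝ)
    (hz : ∀ t ∈ Set.Icc t₀ t₁, HasDerivAt z (z' t) t)
    (hρ : ∀ t ∈ Set.Icc t₀ t₁, HasDerivAt ρ (ρ' t) t)
    (hρpos : ∀ t ∈ Set.Icc t₀ t₁, 0 < ρ t)
    (hρ' : ∀ t ∈ Set.Icc t₀ t₁, ρ' t ≤ -a * ρ t ^ n)
    (hz' : ∀ t ∈ Set.Icc t₀ t₁, z' t ≤ K * ρ t ^ (n + 1)) :
    z t₁ - z t₀ ≤ K / (2 * a) * (ρ t₀ ^ 2 - ρ t₁ ^ 2) := by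
  set c := K / (2 * a) with hc
  have hcpos : 0 < c := by positivity
  have hf : ∀ t ∈ Set.Icc t₀ t₁,
      HasDerivAt (fun t => z t + c * ρ t ^ 2) (z' t + c * (2 * ρ t * ρ' t)) t := by
    intro t htm
    have := (hz t htm).add (((hρ t htm).pow 2).const_mul c)
    refine this.congr_deriv ?_
    push_cast
    ring
  have hmono : AntitoneOn (fun t => z t + c * ρ t ^ 2) (Set.Icc t₀ t₁) := by
    apply antitoneOn_of_deriv_nonpos (convex_Icc t₀ t₁)
    · exact fun t htm => (hf t htm).continuousAt.continuousWithinAt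
    · intro t htm
      rw [interior_Icc] at htm
      exact (hf t (Set.Ioo_subset_Icc_self htm)).differentiableAt.differentiableWithinAt
    · intro t htm
      rw [interior_Icc] at htm
      have htm' := Set.Ioo_subset_Icc_self htm
      rw [(hf t htm').deriv]
      have h1 := hz' t htm'
      have h2 := hρ' t htm'
      have h3 := (hρpos t htm').le
      have hp : (0:ℝ) ≤ ρ t ^ n := pow_nonneg h3 n
      have step : c * (2 * ρ t * ρ' t) ≤ c * (2 * ρ t * (-a * ρ t ^ n)) := by
        apply mul_le_mul_of_nonneg_left _ hcpos.le
        exact mul_le_mul_of_nonneg_left h2 (by positivity)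
      have hzero : K * ρ t ^ (n + 1) + c * (2 * ρ t * (-a * ρ t ^ n)) = 0 := by
        rw [hc, pow_succ]
        field_simp
        ring
      calc z' t + c * (2 * ρ t * ρ' t)
          ≤ K * ρ t ^ (n + 1) + c * (2 * ρ t * (-a * ρ t ^ n)) := add_le_add h1 step
        _ = 0 := hzero
  have := hmono (Set.left_mem_Icc.mpr ht) (Set.right_mem_Icc.mpr ht) ht
  simp only at this
  nlinarith [this]

theorem quadratic_drift_estimate
    (n : ℕ) (a K : ℝ) (ha : 0 < a) (hK : 0 < K)
    (t₀ t₁ : ℝ) (ht : t₀ ≤ t₁)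
    (z ρ z' ρ' : ℝ → ℝ)
    (hz : ∀ t ∈ Set.Icc t₀ t₁, HasDerivAt z (z' t) t)
    (hρ : ∀ t ∈ Set.Icc t₀ t₁, HasDerivAt ρ (ρ' t) t)
    (hρpos : ∀ t ∈ Set.Icc t₀ t₁, 0 < ρ t)
    (hρ' : ∀ t ∈ Set.Icc t₀ t₁, ρ' t ≤ -a * ρ t ^ n)
    (hz' : ∀ t ∈ Set.Icc t₀ t₁, |z' t| ≤ K * ρ t ^ (n + 1)) :
    |z t₁ - z t₀| ≤ K / (2 * a) * (ρ t₀ ^ 2 - ρ t₁ ^ 2) ∧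
      K / (2 * a) * (ρ t₀ ^ 2 - ρ t₁ ^ 2) ≤ K / (2 * a) * ρ t₀ ^ 2 := by
  constructor
  · rw [abs_sub_le_iff]
    constructor
    · exact drift_aux n a K ha hK t₀ t₁ ht z ρ z' ρ' hz hρ hρpos hρ'
        (fun t htm => (abs_le.mp (hz' t htm)).2)
    · have := drift_aux n a K ha hK t₀ t₁ ht (fun t => -z t) ρ (fun t => -(z' t)) ρ'
        (fun t htm => (hz t htm).neg) hρ hρpos hρ'
        (fun t htm => by
          show -(z' t) ≤ K * ρ t ^ (n + 1)
          have := (abs_le.mp (hz' t htm)).1; linarith)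
      linarith
  · have hc : (0:ℝ) ≤ K / (2 * a) := by positivity
    nlinarith [sq_nonneg (ρ t₁)]
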